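/- Let $\mathcal{A} = \begin{pmatrix} A & B \\ B^* & D \end{pmatrix}$ be a bounded self-adjoint operator on $\mathcal{H}_1 \oplus \mathcal{H}_2$ and let $z < \min \sigma_{ess}(\mathcal{A})$ with $z < \min\sigma(D)$. Let $S(z) = A - z - B(D-z)^{-1}B^*$ denote the Schur complement. Then the number of eigenvalues of $\mathcal{A}$ below $z$ (counted with multiplicity) equals the number of negative eigenvalues of $S(z)$: $N(z;\mathcal{A}) = N(0; S(z))$. -/

import Mathlib

open ContinuousLinearMap

/-- The essential spectrum of a bounded operator: the intersection of the spectra of all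
its compact perturbations (Weyl's characterization). -/
noncomputable def essSpectrum {H : Type*} [NormedAddCommGroup H] [NormedSpace ℂ H]
    (T : H →L[ℂ] H) : Set ℂ :=
  ⋂ K ∈ {K : H →L[ℂ] H | IsCompactOperator K}, spectrum ℂ (T + K)

/-- The number of negative eigenvalues (dimension of the spectral subspace for `(-∞,0)`) of a
bounded self-adjoint operator, expressed variationally as the supremum of the dimensions of
subspaces on which the quadratic form is negative definite. -/
noncomputable def negCount {H : Type*} [NormedAddCommGroup H] [InnerProductSpace ℂ H]
    (T : H →L[ℂ] H) : Cardinal :=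
  ⨆ L : {L : Submodule ℂ H // ∀ u ∈ L, u ≠ 0 → ((inner ℂ (T u) u : ℂ)).re < 0},
    Module.rank ℂ L.1

open Pointwise

universe u

theorem eigenvalue_count_schur_complement
    (H₁ H₂ : Type u)
    [NormedAddCommGroup H₁] [InnerProductSpace ℂ H₁] [CompleteSpace H₁]
    [NormedAddCommGroup H₂] [InnerProductSpace ℂ H₂] [CompleteSpace H₂]
    (A : H₁ →L[ℂ] H₁) (B : H₂ →L[ℂ] H₁) (D : H₂ →L[ℂ] H₂)
    (hA : IsSelfAdjoint A) (hD : IsSelfAdjoint D)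
    (eF : WithLp 2 (H₁ × H₂) ≃L[ℂ] H₁ × H₂)
    (heF : eF = WithLp.prodContinuousLinearEquiv 2 ℂ H₁ H₂)
    (𝒜 : WithLp 2 (H₁ × H₂) →L[ℂ] WithLp 2 (H₁ × H₂))
    (h𝒜 : ∀ u, eF (𝒜 u) = (A (eF u).1 + B (eF u).2, adjoint B (eF u).1 + D (eF u).2))
    (z : ℝ)
    (hzess : ∀ w ∈ essSpectrum 𝒜, z < w.re)
    (hzD : ∀ w ∈ spectrum ℂ D, z < w.re)
    (S : H₁ →L[ℂ] H₁)
    (hS : S = A - (z : ℂ) • (1 : H₁ →L[ℂ] H₁) -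
      B ∘L Ring.inverse (D - (z : ℂ) • (1 : H₂ →L[ℂ] H₂)) ∘L adjoint B) :
    negCount (𝒜 - (z : ℂ) • (1 : WithLp 2 (H₁ × H₂) →L[ℂ] WithLp 2 (H₁ × H₂))) =
      negCount S := by
  subst heF hS
  set E : H₂ →L[ℂ] H₂ := D - (z:ℂ) • 1 with hE
  have hEapp : ∀ v : H₂, E v = D v - (z:ℂ) • v := fun v => rfl
  have hzsa : IsSelfAdjoint ((z:ℂ) • (1 : H₂ →L[ℂ] H₂)) :=
    IsSelfAdjoint.smul (by simp [IsSelfAdjoint, Complex.conj_ofReal]) (IsSelfAdjoint.one _)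
  have hEsa : IsSelfAdjoint E := hD.sub hzsa
  have halg : (z:ℂ) • (1 : H₂ →L[ℂ] H₂) = algebraMap ℂ (H₂ →L[ℂ] H₂) (z:ℂ) :=
    (Algebra.algebraMap_eq_smul_one _).symm
  have hspec : spectrum ℂ E = spectrum ℂ D - ({(z:ℂ)} : Set ℂ) := by
    rw [hE, halg, ← spectrum.sub_singleton_eq]
  have hspecEpos : ∀ x ∈ spectrum ℂ E, 0 < x.re := by
    intro x hx
    rw [hspec] at hx
    obtain ⟨w, hw, y, hy, rfl⟩ := Set.mem_sub.mp hx
    simp only [Set.mem_singleton_iff] at hy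
    subst hy
    simpa using hzD w hw
  have hE0 : (0 : H₂ →L[ℂ] H₂) ≤ E := by
    rw [StarOrderedRing.nonneg_iff_spectrum_nonneg (R := ℝ) E hEsa]
    intro x hx
    have hxc : algebraMap ℝ ℂ x ∈ spectrum ℂ E := spectrum.algebraMap_mem ℂ hx
    simpa using (hspecEpos _ hxc).le
  have hEnonneg : ∀ v : H₂, 0 ≤ (inner ℂ (E v) v : ℂ).re := by
    intro v
    exact (Complex.le_def.mp (((ContinuousLinearMap.nonneg_iff_isPositive E).mp hE0).inner_nonneg_left v)).1
  have hEunit : IsUnit E := by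
    rw [← spectrum.zero_notMem_iff (R := ℂ)]
    intro h0
    simpa using hspecEpos 0 h0
  set Einv : H₂ →L[ℂ] H₂ := Ring.inverse E with hEinvdef
  have hmul : ∀ v, E (Einv v) = v := by
    intro v
    have h1 : E * Einv = 1 := Ring.mul_inverse_cancel E hEunit
    calc E (Einv v) = (E * Einv) v := rfl
    _ = v := by rw [h1]; rfl
  have hEsym : ∀ a b : H₂, (inner ℂ (E a) b : ℂ) = inner ℂ a (E b) := by
    intro a b
    conv_lhs => rw [← hEsa.adjoint_eq]
    exact adjoint_inner_left E b a
  have hBsym : ∀ (a : H₂) (b : H₁), (inner ℂ (B a) b : ℂ) = inner ℂ a (adjoint B b) :=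
    fun a b => (adjoint_inner_right B a b).symm
  have main : ∀ (x : H₁) (y : H₂),
      (inner ℂ (A x) x : ℂ) + inner ℂ (B y) x + inner ℂ (adjoint B x) y + inner ℂ (D y) y
        - (z:ℂ) * inner ℂ x x - (z:ℂ) * inner ℂ y y
      = ((inner ℂ ((A - (z:ℂ) • (1 : H₁ →L[ℂ] H₁) - B ∘L Einv ∘L adjoint B) x) x : ℂ))
        + inner ℂ (E (Einv (adjoint B x) + y)) (Einv (adjoint B x) + y) := by
    intro x y
    set r : H₂ := Einv (adjoint B x) with hrdef
    have hq : adjoint B x = E r := (hmul _).symm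
    simp only [sub_apply, smul_apply, one_apply_eq_self, comp_apply]
    rw [← hrdef]
    simp only [map_add, inner_add_left, inner_add_right, inner_sub_left, inner_smul_left,
      Complex.conj_ofReal]
    rw [hq, hBsym y x, hq, hBsym r x, hq, hEsym r r, hEsym r y, hEsym y r,
      hEapp y, inner_sub_left, inner_smul_left, Complex.conj_ofReal]
    ring
  have key : ∀ u : WithLp 2 (H₁ × H₂),
      (inner ℂ ((𝒜 - (z:ℂ) • (1 : WithLp 2 (H₁ × H₂) →L[ℂ] WithLp 2 (H₁ × H₂))) u) u : ℂ) =
        inner ℂ ((A - (z:ℂ) • (1 : H₁ →L[ℂ] H₁) - B ∘L Einv ∘L adjoint B) u.fst) u.fst +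
        inner ℂ (E (Einv (adjoint B u.fst) + u.snd)) (Einv (adjoint B u.fst) + u.snd) := by
    intro u
    have hfst : (𝒜 u).fst = A u.fst + B u.snd := congrArg Prod.fst (h𝒜 u)
    have hsnd : (𝒜 u).snd = adjoint B u.fst + D u.snd := congrArg Prod.snd (h𝒜 u)
    rw [← main u.fst u.snd]
    rw [sub_apply, smul_apply, one_apply_eq_self, WithLp.prod_inner_apply]
    change inner ℂ (𝒜 u - (z:ℂ) • u).fst u.fst + inner ℂ (𝒜 u - (z:ℂ) • u).snd u.snd = _
    rw [WithLp.sub_fst,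
      WithLp.sub_snd, WithLp.smul_fst, WithLp.smul_snd, hfst, hsnd]
    simp only [inner_sub_left, inner_add_left, inner_smul_left, Complex.conj_ofReal]
    ring
  rw [negCount, negCount]
  apply le_antisymm
  · refine ciSup_le' ?_
    rintro ⟨M, hM⟩
    let π : WithLp 2 (H₁ × H₂) →ₗ[ℂ] H₁ :=
      (LinearMap.fst ℂ H₁ H₂) ∘ₗ (WithLp.linearEquiv 2 ℂ (H₁ × H₂)).toLinearMap
    have hπ : ∀ u : WithLp 2 (H₁ × H₂), π u = u.fst := fun u => rfl
    let g : M →ₗ[ℂ] H₁ := π ∘ₗ M.subtype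
    have hginj : Function.Injective g := by
      rw [← LinearMap.ker_eq_bot, LinearMap.ker_eq_bot']
      rintro ⟨m, hm⟩ hgm
      have hmfst : m.fst = 0 := hgm
      rw [Submodule.mk_eq_zero]
      by_contra hne
      have hQ := hM m hm hne
      have hk := key m
      rw [hmfst] at hk
      simp only [map_zero] at hk
      rw [zero_add, inner_zero_left, zero_add] at hk
      rw [hk] at hQ
      exact absurd hQ (not_lt.mpr (hEnonneg m.snd))
    have hrange : LinearMap.range g = M.map π := by
      rw [LinearMap.range_comp, Submodule.range_subtype]
    have hrank : Module.rank ℂ M = Module.rank ℂ (M.map π) := by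
      rw [← hrange]
      exact (rank_range_of_injective g hginj).symm
    refine le_ciSup_of_le (Cardinal.bddAbove_range _) ⟨M.map π, ?_⟩ hrank.le
    rintro v hv hvne
    obtain ⟨m, hm, rfl⟩ := Submodule.mem_map.mp hv
    have hm0 : m ≠ 0 := by
      intro h
      apply hvne
      rw [h, map_zero]
    have hQ := hM m hm hm0
    have hk := key m
    rw [hk] at hQ
    have := hEnonneg (Einv (adjoint B m.fst) + m.snd)
    rw [hπ]
    simp only [Complex.add_re] at hQ
    linarith
  · refine ciSup_le' ?_
    rintro ⟨L, hL⟩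
    let φ : H₁ →ₗ[ℂ] WithLp 2 (H₁ × H₂) :=
      (WithLp.linearEquiv 2 ℂ (H₁ × H₂)).symm.toLinearMap ∘ₗ
        LinearMap.prod LinearMap.id (-((Einv ∘L adjoint B) : H₁ →L[ℂ] H₂).toLinearMap)
    have hφfst : ∀ v, (φ v).fst = v := fun v => rfl
    have hφsnd : ∀ v, (φ v).snd = -(Einv (adjoint B v)) := fun v => rfl
    have hφinj : Function.Injective φ := by
      intro a b h
      have := congrArg (fun w : WithLp 2 (H₁ × H₂) => w.fst) h
      simpa only [hφfst] using this
    refine le_ciSup_of_le (Cardinal.bddAbove_range _) ⟨L.map φ, ?_⟩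
      ((Submodule.equivMapOfInjective φ hφinj L).rank_eq).le
    rintro v hv hvne
    obtain ⟨w, hw, rfl⟩ := Submodule.mem_map.mp hv
    have hw0 : w ≠ 0 := by
      intro h
      apply hvne
      rw [h, map_zero]
    have hk := key (φ w)
    rw [hφfst, hφsnd] at hk
    simp only [add_neg_cancel, map_zero, inner_zero_left, add_zero] at hk
    rw [hk]
    exact hL w hw hw0
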